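/- The number of integers not exceeding N that cannot be written as a sum of two squares and at most one power of 2 is at least ⌊(N − 23)/72⌋ + 1 for every integer N ≥ 23; consequently, the set of such integers has lower asymptotic density at least 1/72. -/

import Mathlib

lemma zmod8_0 : ∀ u v : ZMod 8, (23 : ZMod 8) ≠ u^2+v^2 := by decide
lemma zmod8_a0 : ∀ u v : ZMod 8, (23 : ZMod 8) ≠ u^2+v^2+1 := by decide
lemma zmod9_a1 : ∀ u v : ZMod 9, (23 : ZMod 9) ≠ u^2+v^2+2 := by decide
lemma zmod8_a2 : ∀ u v : ZMod 8, (23 : ZMod 8) ≠ u^2+v^2+4 := by decide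

/-- A natural number `m` is a sum of two squares and at most one power of 2. -/
def IsSumTwoSquaresAddAtMostOnePow (m : ℕ) : Prop :=
  ∃ x y : ℤ, (m : ℤ) = x ^ 2 + y ^ 2 ∨ ∃ a : ℕ, (m : ℤ) = x ^ 2 + y ^ 2 + 2 ^ a

lemma not_rep (k : ℕ) : ¬ IsSumTwoSquaresAddAtMostOnePow (23 + 72*k) := by
  rintro ⟨x, y, h | ⟨a, h⟩⟩
  · have h8 := congrArg (fun z : ℤ => (z : ZMod 8)) h
    push_cast at h8
    have h72 : (72 : ZMod 8) = 0 := by decide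
    rw [h72, zero_mul, add_zero] at h8
    exact zmod8_0 x y h8
  · match a with
    | 0 =>
      have h8 := congrArg (fun z : ℤ => (z : ZMod 8)) h
      push_cast at h8
      have h72 : (72 : ZMod 8) = 0 := by decide
      rw [h72, zero_mul, add_zero] at h8
      exact zmod8_a0 x y (by rw [h8])
    | 1 =>
      have h9 := congrArg (fun z : ℤ => (z : ZMod 9)) h
      push_cast at h9
      have h72 : (72 : ZMod 9) = 0 := by decide
      rw [h72, zero_mul, add_zero] at h9
      exact zmod9_a1 x y (by rw [h9])
    | 2 =>
      have h8 := congrArg (fun z : ℤ => (z : ZMod 8)) h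
      push_cast at h8
      have h72 : (72 : ZMod 8) = 0 := by decide
      rw [h72, zero_mul, add_zero] at h8
      exact zmod8_a2 x y (by rw [h8])
    | (b+3) =>
      have h8 := congrArg (fun z : ℤ => (z : ZMod 8)) h
      push_cast at h8
      have h72 : (72 : ZMod 8) = 0 := by decide
      have hp : (2 : ZMod 8)^(b+3) = 0 := by
        rw [pow_add, show ((2:ZMod 8)^3 = 0) from by decide, mul_zero]
      rw [h72, zero_mul, add_zero, hp, add_zero] at h8
      exact zmod8_0 x y h8

lemma count_lower (N : ℕ) (hN : 23 ≤ N) :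
    (N - 23) / 72 + 1 ≤
      Nat.card {m : ℕ | 0 < m ∧ m ≤ N ∧ ¬ IsSumTwoSquaresAddAtMostOnePow m} := by
  set S : Set ℕ := {m : ℕ | 0 < m ∧ m ≤ N ∧ ¬ IsSumTwoSquaresAddAtMostOnePow m} with hS
  have hSfin : S.Finite := (Set.finite_Icc 1 N).subset fun m hm => ⟨hm.1, hm.2.1⟩
  set q := (N - 23) / 72 with hq
  set F : Finset ℕ := (Finset.range (q+1)).image (fun k => 23 + 72*k) with hF
  have hinj : Function.Injective (fun k : ℕ => 23 + 72*k) := fun a b h => by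
    simp only at h; omega
  have hsub : (↑F : Set ℕ) ⊆ S := by
    intro m hm
    simp only [hF, Finset.coe_image, Set.mem_image, Finset.coe_range, Set.mem_Iio] at hm
    obtain ⟨k, hk, rfl⟩ := hm
    have hkq : k ≤ q := by omega
    have h1 : 72 * k ≤ 72 * q := by omega
    have h2 : 72 * q ≤ N - 23 := by
      rw [hq, mul_comm]; exact Nat.div_mul_le_self _ _
    refine ⟨by omega, by omega, not_rep k⟩
  have hcard : F.card = q + 1 := by
    rw [hF, Finset.card_image_of_injective _ hinj, Finset.card_range]
  calc q + 1 = (↑F : Set ℕ).ncard := by rw [Set.ncard_coe_finset, hcard]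
    _ ≤ S.ncard := Set.ncard_le_ncard hsub hSfin
    _ = Nat.card S := (Nat.card_coe_set_eq S).symm

theorem count_not_one_pow :
    (∀ N : ℕ, 23 ≤ N →
      (N - 23) / 72 + 1 ≤
        Nat.card {m : ℕ | 0 < m ∧ m ≤ N ∧ ¬ IsSumTwoSquaresAddAtMostOnePow m}) ∧
    (1 / 72 : ℝ) ≤ Filter.liminf
      (fun N : ℕ =>
        (Nat.card {m : ℕ | 0 < m ∧ m ≤ N ∧ ¬ IsSumTwoSquaresAddAtMostOnePow m} : ℝ) / N)
      Filter.atTop := by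
  refine ⟨count_lower, ?_⟩
  set f : ℕ → ℝ := fun N =>
    (Nat.card {m : ℕ | 0 < m ∧ m ≤ N ∧ ¬ IsSumTwoSquaresAddAtMostOnePow m} : ℝ) / N with hf
  set g : ℕ → ℝ := fun N => 1/72 - 1/N with hg
  have hgt : Filter.Tendsto g Filter.atTop (nhds (1/72)) := by
    have := tendsto_one_div_atTop_nhds_zero_nat (𝕜 := ℝ)
    simpa [hg] using Filter.Tendsto.sub (tendsto_const_nhds (x := (1/72 : ℝ))) this
  have hgl : Filter.liminf g Filter.atTop = 1/72 := hgt.liminf_eq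
  have hfle : ∀ N : ℕ, f N ≤ 1 := by
    intro N
    have hsub : {m : ℕ | 0 < m ∧ m ≤ N ∧ ¬ IsSumTwoSquaresAddAtMostOnePow m} ⊆ Set.Icc 1 N :=
      fun m hm => ⟨hm.1, hm.2.1⟩
    have h1 : Nat.card {m : ℕ | 0 < m ∧ m ≤ N ∧ ¬ IsSumTwoSquaresAddAtMostOnePow m} ≤ N := by
      calc Nat.card {m : ℕ | 0 < m ∧ m ≤ N ∧ ¬ IsSumTwoSquaresAddAtMostOnePow m}
          = Set.ncard {m : ℕ | 0 < m ∧ m ≤ N ∧ ¬ IsSumTwoSquaresAddAtMostOnePow m} :=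
            Nat.card_coe_set_eq _
        _ ≤ (Set.Icc 1 N).ncard := Set.ncard_le_ncard hsub (Set.finite_Icc _ _)
        _ = (Finset.Icc 1 N).card := by
              rw [← Set.ncard_coe_finset]; norm_num
        _ ≤ N := by rw [Nat.card_Icc]; omega
    rcases Nat.eq_zero_or_pos N with h | h
    · simp [hf, h]
    · rw [hf]
      rw [div_le_one (by positivity)]
      exact_mod_cast h1
  have hle : g ≤ᶠ[Filter.atTop] f := by
    filter_upwards [Filter.eventually_ge_atTop 23] with N hN
    have hN0 : (0 : ℝ) < N := by positivity
    set q := (N - 23) / 72 with hq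
    have hcard := count_lower N hN
    have hnat : N ≤ 72 * q + 144 := by
      have := Nat.div_add_mod (N - 23) 72
      have := Nat.mod_lt (N - 23) (show 0 < 72 by norm_num)
      omega
    have hkey : (N : ℝ) / 72 - 1 ≤ (q : ℝ) + 1 := by
      have : (N : ℝ) ≤ 72 * q + 144 := by exact_mod_cast hnat
      linarith
    have step1 : g N ≤ ((q : ℝ) + 1) / N := by
      have e : g N = ((N : ℝ)/72 - 1)/N := by
        simp only [hg]
        field_simp
      rw [e, div_le_div_iff₀ hN0 hN0]
      nlinarith
    have step2 : ((q : ℝ) + 1) / N ≤ f N := by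
      show ((q : ℝ) + 1) / N ≤
        (Nat.card {m : ℕ | 0 < m ∧ m ≤ N ∧ ¬ IsSumTwoSquaresAddAtMostOnePow m} : ℝ) / N
      gcongr
      exact_mod_cast hcard
    exact le_trans step1 step2
  have hfb : Filter.IsBoundedUnder (· ≥ ·) Filter.atTop f :=
    Filter.isBoundedUnder_of ⟨0, fun N => by positivity⟩
  have hgb : Filter.IsBoundedUnder (· ≥ ·) Filter.atTop g :=
    hgt.isBoundedUnder_ge
  have hfc : Filter.IsCoboundedUnder (· ≥ ·) Filter.atTop f :=
    Filter.IsBoundedUnder.isCoboundedUnder_ge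
      (Filter.isBoundedUnder_of ⟨1, fun N => hfle N⟩)
  calc (1/72 : ℝ) = Filter.liminf g Filter.atTop := hgl.symm
    _ ≤ Filter.liminf f Filter.atTop := Filter.liminf_le_liminf hle hgb hfc
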